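/- Let k ≥ 1 and let G be a finite abelian group containing elements t_1,…,t_{r_α} with 2·t_i = 0, elements a_1,…,a_{r_2} each of order exactly 5, elements b_1,…,b_{r_ω} each of order greater than 2k+1, and elements d_1,…,d_{z_ω} each of order greater than k+1. Suppose every g ∈ G can be written as g = Σ_i ε_i·t_i + Σ_j α_j·a_j + Σ_j β_j·b_j + Σ_j δ_j·d_j with ε_i, δ_j ∈ ℕ, α_j, β_j ∈ ℤ, and Σ ε_i + Σ |α_j| + Σ |β_j| + Σ δ_j ≤ k. Then |G| ≤ Σ_{i_α=0}^{r_α} Σ_{i_ω=0}^{r_ω} Σ_{σ_1,σ_2 ≥ 0, σ_1+σ_2 ≤ r_2} C(r_α, i_α) · C(r_ω, i_ω) · 2^{i_ω} · 2^{σ_1+σ_2} · r_2! / ( σ_1! σ_2! (r_2 − σ_1 − σ_2)! ) · C( z_ω + k − i_α − σ_1 − 2σ_2 , i_ω + z_ω ), where C(a,b) = 0 whenever a is negative or a < b. -/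

import Mathlib

open Finset

def cubeSB {I : Type*} [DecidableEq I] [Fintype I] (u : Finset I) (M : ℕ) : Finset (I → ℕ) :=
  (Fintype.piFinset fun i => if i ∈ u then Finset.Iic M else ({0} : Finset ℕ)).filter
    (fun f => ∑ i ∈ u, f i ≤ M)

lemma mem_cubeSB {I : Type*} [DecidableEq I] [Fintype I] {u : Finset I} {M : ℕ} {f : I → ℕ} :
    f ∈ cubeSB u M ↔ (∀ i ∉ u, f i = 0) ∧ ∑ i ∈ u, f i ≤ M := by
  simp only [cubeSB, mem_filter, Fintype.mem_piFinset, and_congr_left_iff]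
  intro hs
  constructor
  · intro h i hi
    have := h i
    rw [if_neg hi] at this
    simpa using this
  · intro h i
    by_cases hi : i ∈ u
    · rw [if_pos hi]
      exact mem_Iic.2 (le_trans (Finset.single_le_sum (fun j _ => Nat.zero_le _) hi) hs)
    · rw [if_neg hi]
      simp [h i hi]

lemma cubeSB_card {I : Type*} [DecidableEq I] [Fintype I] (u : Finset I) (M : ℕ) :
    (cubeSB u M).card = (M + u.card).choose u.card := by
  induction u using Finset.induction_on generalizing M with
  | empty =>
    rw [cubeSB, Finset.filter_true_of_mem (fun _ _ => by simp), Fintype.card_piFinset]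
    simp
  | @insert a u ha ih =>
    rw [Finset.card_eq_sum_card_fiberwise (f := fun f => f a) (t := Finset.Iic M)
      (fun f hf => by
        rw [Finset.mem_coe, mem_cubeSB] at hf
        exact mem_Iic.2 (le_trans (Finset.single_le_sum (fun j _ => Nat.zero_le _)
          (mem_insert_self a u)) hf.2))]
    have hfib : ∀ v ∈ Finset.Iic M,
        ((cubeSB (insert a u) M).filter (fun f => f a = v)).card = (cubeSB u (M - v)).card := by
      intro v hv
      rw [mem_Iic] at hv
      refine Finset.card_nbij' (fun f => Function.update f a 0)
        (fun g => Function.update g a v) ?_ ?_ ?_ ?_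
      · intro f hf
        simp only [Finset.mem_coe, mem_filter, mem_cubeSB] at hf
        obtain ⟨⟨h0, hsum⟩, hfa⟩ := hf
        rw [Finset.sum_insert ha, hfa] at hsum
        show Function.update f a 0 ∈ cubeSB u (M - v)
        rw [mem_cubeSB]
        constructor
        · intro i hi
          by_cases hia : i = a
          · subst hia; simp
          · rw [Function.update_of_ne hia]
            exact h0 i (by simp [hia, hi])
        · have : ∀ i ∈ u, Function.update f a 0 i = f i := by
            intro i hi
            exact Function.update_of_ne (ne_of_mem_of_not_mem hi ha) _ _
          have h2 : ∑ x ∈ u, Function.update f a 0 x = ∑ x ∈ u, f x :=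
            Finset.sum_congr rfl this
          rw [h2]
          omega
      · intro g hg
        simp only [Finset.mem_coe, mem_cubeSB] at hg
        obtain ⟨h0, hsum⟩ := hg
        show Function.update g a v ∈ (cubeSB (insert a u) M).filter (fun f => f a = v)
        rw [mem_filter, mem_cubeSB]
        have hsc : ∀ i ∈ u, Function.update g a v i = g i := by
          intro i hi
          exact Function.update_of_ne (ne_of_mem_of_not_mem hi ha) _ _
        refine ⟨⟨?_, ?_⟩, Function.update_self _ _ _⟩
        · intro i hi
          have hia : i ≠ a := by
            intro h; subst h; exact hi (mem_insert_self i u)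
          rw [Function.update_of_ne hia]
          exact h0 i (fun h => hi (mem_insert_of_mem h))
        · have h2 : ∑ x ∈ u, Function.update g a v x = ∑ x ∈ u, g x :=
            Finset.sum_congr rfl hsc
          rw [Finset.sum_insert ha, Function.update_self, h2]
          omega
      · intro f hf
        simp only [Finset.mem_coe, mem_filter] at hf
        show Function.update (Function.update f a 0) a v = f
        funext i
        by_cases hia : i = a
        · subst hia; simp [hf.2]
        · simp [Function.update_of_ne hia]
      · intro g hg
        simp only [Finset.mem_coe, mem_cubeSB] at hg
        show Function.update (Function.update g a v) a 0 = g
        funext i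
        by_cases hia : i = a
        · subst hia; simp [(hg.1 _ ha).symm]
        · simp [Function.update_of_ne hia]
    rw [Finset.sum_congr rfl hfib,
      Finset.sum_congr rfl (fun v _ => ih (M - v)),
      Finset.card_insert_of_notMem ha]
    have hre : ∑ v ∈ Finset.Iic M, (M - v + u.card).choose u.card
        = ∑ j ∈ Finset.Icc u.card (M + u.card), j.choose u.card := by
      refine Finset.sum_nbij' (i := fun v => M - v + u.card) (j := fun j => M + u.card - j)
        ?_ ?_ ?_ ?_ ?_
      · intro v hv; simp only [mem_Iic] at hv; simp only [mem_Icc]; omega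
      · intro j hj; simp only [mem_Icc] at hj; simp only [mem_Iic]; omega
      · intro v hv; simp only [mem_Iic] at hv; omega
      · intro j hj; simp only [mem_Icc] at hj; omega
      · intro v hv; rfl
    rw [hre, Nat.sum_Icc_choose, Nat.add_assoc]


lemma multinom_eq (r σ₁ σ₂ : ℕ) (h : σ₁ + σ₂ ≤ r) :
    r.choose σ₁ * (r - σ₁).choose σ₂ =
      r.factorial / (σ₁.factorial * σ₂.factorial * (r - σ₁ - σ₂).factorial) := by
  have h1 : σ₁ ≤ r := le_trans (Nat.le_add_right _ _) h
  have h2 : σ₂ ≤ r - σ₁ := Nat.le_sub_of_add_le (by omega)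
  have e1 := Nat.choose_mul_factorial_mul_factorial h1
  have e2 := Nat.choose_mul_factorial_mul_factorial h2
  symm
  apply Nat.div_eq_of_eq_mul_left
  · positivity
  · calc r.factorial = r.choose σ₁ * σ₁.factorial * (r - σ₁).factorial := e1.symm
      _ = r.choose σ₁ * σ₁.factorial * ((r - σ₁).choose σ₂ * σ₂.factorial *
            (r - σ₁ - σ₂).factorial) := by rw [e2]
      _ = r.choose σ₁ * (r - σ₁).choose σ₂ *
            (σ₁.factorial * σ₂.factorial * (r - σ₁ - σ₂).factorial) := by ring

/-- **Improved Moore bound for mixed Abelian Cayley graphs with `r₂` undirected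
generators of order 5.** Let `G` be a finite abelian group containing `r_α`
involutions `tᵢ`, elements `a₁,…,a_{r₂}` of order exactly `5` (taken with their
inverses), elements `b₁,…,b_{r_ω}` of order `> 2k+1` (taken with their inverses),
and elements `d₁,…,d_{z_ω}` of order `> k+1` (without their inverses). If the mixed
Cayley graph on these generators has diameter at most `k`, then
`|G| ≤ Σ_{i_α, i_ω, σ₁+σ₂ ≤ r₂} C(r_α,i_α)·C(r_ω,i_ω)·2^{i_ω}·2^{σ₁+σ₂}·
r₂!/(σ₁!σ₂!(r₂−σ₁−σ₂)!)·C(z_ω+k−i_α−σ₁−2σ₂, i_ω+z_ω)`,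
with the convention `C(a,b) = 0` for `a` negative or `a < b`. -/
theorem stmt_1 {G : Type*} [AddCommGroup G] [Fintype G]
    (k rα r₂ rω zω : ℕ) (hk : 1 ≤ k)
    (t : Fin rα → G) (a : Fin r₂ → G) (b : Fin rω → G) (d : Fin zω → G)
    (ht : ∀ i, 2 • t i = 0)
    (ha : ∀ j, addOrderOf (a j) = 5)
    (hb : ∀ j, 2 * k + 1 < addOrderOf (b j))
    (hd : ∀ j, k + 1 < addOrderOf (d j))
    (hdiam : ∀ g : G, ∃ (ε : Fin rα → ℕ) (α : Fin r₂ → ℤ) (β : Fin rω → ℤ)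
        (δ : Fin zω → ℕ),
      g = (∑ i, ε i • t i) + (∑ j, α j • a j) + (∑ j, β j • b j) + (∑ j, δ j • d j) ∧
      (∑ i, ε i) + (∑ j, (α j).natAbs) + (∑ j, (β j).natAbs) + (∑ j, δ j) ≤ k) :
    Fintype.card G ≤
      ∑ iα ∈ Finset.range (rα + 1), ∑ iω ∈ Finset.range (rω + 1),
      ∑ σ₁ ∈ Finset.range (r₂ + 1), ∑ σ₂ ∈ Finset.range (r₂ - σ₁ + 1),
        Nat.choose rα iα * Nat.choose rω iω * 2 ^ iω * 2 ^ (σ₁ + σ₂) *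
        (Nat.factorial r₂ /
          (Nat.factorial σ₁ * Nat.factorial σ₂ * Nat.factorial (r₂ - σ₁ - σ₂))) *
        (if iα + σ₁ + 2 * σ₂ ≤ zω + k then
            Nat.choose (zω + k - (iα + σ₁ + 2 * σ₂)) (iω + zω)
          else 0) := by
  classical
  -- the canonical tuple space
  set X := Finset (Fin rα) × Finset (Fin r₂) × Finset (Fin r₂) × Finset (Fin r₂) ×
    Finset (Fin rω) × Finset (Fin rω) × (Fin rω → ℕ) × (Fin zω → ℕ) with hX
  -- evaluation map
  set ev : X → G := fun x =>
    (∑ i, (if i ∈ x.1 then (1:ℕ) else 0) • t i) +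
    (∑ j, ((if j ∈ x.2.1 then (1:ℤ) else if j ∈ x.2.2.1 then 2 else 0) *
        (if j ∈ x.2.2.2.1 then 1 else -1)) • a j) +
    (∑ j, (if j ∈ x.2.2.2.2.1 then
        (if j ∈ x.2.2.2.2.2.1 then (1:ℤ) else -1) * (x.2.2.2.2.2.2.1 j + 1) else 0) • b j) +
    (∑ j, x.2.2.2.2.2.2.2 j • d j) with hev
  -- the finite set of admissible tuples
  set T : Finset X := ((univ : Finset (Finset (Fin rα))) ×ˢ (univ : Finset (Finset (Fin r₂))) ×ˢ
      (univ : Finset (Finset (Fin r₂))) ×ˢ (univ : Finset (Finset (Fin r₂))) ×ˢ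
      (univ : Finset (Finset (Fin rω))) ×ˢ (univ : Finset (Finset (Fin rω))) ×ˢ
      (Fintype.piFinset fun _ : Fin rω => Finset.Iic k) ×ˢ
      (Fintype.piFinset fun _ : Fin zω => Finset.Iic k)).filter
    (fun x => Disjoint x.2.1 x.2.2.1 ∧ x.2.2.2.1 ⊆ x.2.1 ∪ x.2.2.1 ∧
      x.2.2.2.2.2.1 ⊆ x.2.2.2.2.1 ∧ (∀ j ∉ x.2.2.2.2.1, x.2.2.2.2.2.2.1 j = 0) ∧
      x.1.card + (x.2.1.card + 2 * x.2.2.1.card) +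
        (x.2.2.2.2.1.card + ∑ j, x.2.2.2.2.2.2.1 j) + ∑ j, x.2.2.2.2.2.2.2 j ≤ k) with hT
  have hTmem : ∀ x : X, x ∈ T ↔ ((∀ j, x.2.2.2.2.2.2.1 j ≤ k) ∧ (∀ j, x.2.2.2.2.2.2.2 j ≤ k)) ∧
      (Disjoint x.2.1 x.2.2.1 ∧ x.2.2.2.1 ⊆ x.2.1 ∪ x.2.2.1 ∧
      x.2.2.2.2.2.1 ⊆ x.2.2.2.2.1 ∧ (∀ j ∉ x.2.2.2.2.1, x.2.2.2.2.2.2.1 j = 0) ∧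
      x.1.card + (x.2.1.card + 2 * x.2.2.1.card) +
        (x.2.2.2.2.1.card + ∑ j, x.2.2.2.2.2.2.1 j) + ∑ j, x.2.2.2.2.2.2.2 j ≤ k) := by
    intro x
    rw [hT, mem_filter, Finset.mem_product, Finset.mem_product, Finset.mem_product,
      Finset.mem_product, Finset.mem_product, Finset.mem_product, Finset.mem_product]
    simp only [Finset.mem_univ, true_and, Fintype.mem_piFinset, mem_Iic]
  -- Step 1 : |G| ≤ |T|
  have step1 : Fintype.card G ≤ T.card := by
    rw [← Finset.card_univ]
    apply Finset.card_le_card_of_surjOn ev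
    intro g _
    obtain ⟨ε, α, β, δ, hg, hw⟩ := hdiam g
    set c : Fin r₂ → ℤ := fun j => (α j + 2) % 5 - 2 with hc
    have hcb : ∀ j, -2 ≤ c j ∧ c j ≤ 2 := by
      intro j
      have h1 := Int.emod_nonneg (α j + 2) (by norm_num : (5:ℤ) ≠ 0)
      have h2 := Int.emod_lt_of_pos (α j + 2) (by norm_num : (0:ℤ) < 5)
      constructor <;> simp only [hc] <;> omega
    have hcabs : ∀ j, (c j).natAbs ≤ (α j).natAbs := by
      intro j; simp only [hc]; omega
    set A : Finset (Fin rα) := univ.filter (fun i => ε i % 2 = 1) with hA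
    set S1 : Finset (Fin r₂) := univ.filter (fun j => (c j).natAbs = 1) with hS1
    set S2 : Finset (Fin r₂) := univ.filter (fun j => (c j).natAbs = 2) with hS2
    set P : Finset (Fin r₂) := univ.filter (fun j => 1 ≤ c j) with hP
    set sf : Finset (Fin rω) := univ.filter (fun j => β j ≠ 0) with hsf
    set pf : Finset (Fin rω) := univ.filter (fun j => 0 < β j) with hpf
    set m : Fin rω → ℕ := fun j => (β j).natAbs - 1 with hm
    have hβk : ∀ j, (β j).natAbs ≤ k := by
      intro j
      have h1 : (β j).natAbs ≤ ∑ j, (β j).natAbs :=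
        Finset.single_le_sum (f := fun j => (β j).natAbs) (fun _ _ => Nat.zero_le _) (mem_univ j)
      omega
    have hδk : ∀ j, δ j ≤ k := by
      intro j
      have h1 : δ j ≤ ∑ j, δ j :=
        Finset.single_le_sum (f := fun j => δ j) (fun _ _ => Nat.zero_le _) (mem_univ j)
      omega
    have w1 : A.card ≤ ∑ i, ε i := by
      rw [hA, Finset.card_filter]
      exact Finset.sum_le_sum (fun i _ => by split_ifs with h <;> omega)
    have w2 : S1.card + 2 * S2.card ≤ ∑ j, (α j).natAbs := by
      calc S1.card + 2 * S2.card
          = ∑ j, ((if (c j).natAbs = 1 then 1 else 0) +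
              2 * (if (c j).natAbs = 2 then 1 else 0)) := by
            rw [hS1, hS2, Finset.card_filter, Finset.card_filter, Finset.mul_sum,
              ← Finset.sum_add_distrib]
        _ ≤ ∑ j, (α j).natAbs :=
            Finset.sum_le_sum (fun j _ => by have := hcabs j; split_ifs <;> omega)
    have w3 : sf.card + ∑ j, m j ≤ ∑ j, (β j).natAbs := by
      calc sf.card + ∑ j, m j
          = ∑ j, ((if β j ≠ 0 then 1 else 0) + ((β j).natAbs - 1)) := by
            rw [hsf, Finset.card_filter, ← Finset.sum_add_distrib]
        _ ≤ ∑ j, (β j).natAbs :=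
            Finset.sum_le_sum (fun j _ => by split_ifs <;> omega)
    refine ⟨(A, S1, S2, P, sf, pf, m, δ), ?_, ?_⟩
    · rw [Finset.mem_coe, hTmem]
      dsimp only
      refine ⟨⟨fun j => by simp only [hm]; have := hβk j; omega, hδk⟩, ?_, ?_, ?_, ?_, ?_⟩
      · rw [Finset.disjoint_left]
        intro j hj1 hj2
        rw [hS1, mem_filter] at hj1
        rw [hS2, mem_filter] at hj2
        omega
      · intro j hj
        rw [hP, mem_filter] at hj
        rw [Finset.mem_union, hS1, hS2, mem_filter, mem_filter]
        have := hcb j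
        simp only [mem_univ, true_and]
        omega
      · intro j hj
        rw [hpf, mem_filter] at hj
        rw [hsf, mem_filter]
        refine ⟨mem_univ _, by omega⟩
      · intro j hj
        rw [hsf, mem_filter] at hj
        simp only [mem_univ, true_and, not_not] at hj
        have : β j = 0 := by tauto
        simp only [hm, this]
        simp
      · omega
    · rw [hg, hev]
      dsimp only
      congr 1
      congr 1
      congr 1
      · apply Finset.sum_congr rfl
        intro i _
        have hcoef : (if i ∈ A then (1:ℕ) else 0) = ε i % 2 := by
          simp only [hA, mem_filter, mem_univ, true_and]
          split_ifs with h <;> omega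
        rw [hcoef]
        conv_rhs => rw [← Nat.div_add_mod (ε i) 2]
        rw [add_nsmul, mul_nsmul, ht i, smul_zero, zero_add]
      · apply Finset.sum_congr rfl
        intro j _
        have h5 : (5:ℤ) • a j = 0 := by
          have h := addOrderOf_nsmul_eq_zero (a j)
          rw [ha j] at h
          rw [show ((5:ℤ)) = ((5:ℕ):ℤ) from rfl, natCast_zsmul]
          exact h
        have hcoef : ((if j ∈ S1 then (1:ℤ) else if j ∈ S2 then 2 else 0) *
            (if j ∈ P then 1 else -1)) = c j := by
          simp only [hS1, hS2, hP, mem_filter, mem_univ, true_and]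
          have := hcb j
          split_ifs <;> omega
        rw [hcoef]
        have hqe : c j + (α j + 2) / 5 * 5 = α j := by
          simp only [hc]
          omega
        calc c j • a j = c j • a j + ((α j + 2)/5) • ((5:ℤ) • a j) := by
              rw [h5, smul_zero, add_zero]
          _ = (c j + (α j + 2)/5 * 5) • a j := by rw [add_smul, mul_smul]
          _ = α j • a j := by rw [hqe]
      · apply Finset.sum_congr rfl
        intro j _
        have hcoef : (if j ∈ sf then
            (if j ∈ pf then (1:ℤ) else -1) * ((m j : ℤ) + 1) else 0) = β j := by
          simp only [hsf, hpf, mem_filter, mem_univ, true_and, hm]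
          split_ifs <;> omega
        rw [hcoef]
  -- Step 2 : counting
  have step2 : T.card ≤
      ∑ iα ∈ Finset.range (rα + 1), ∑ iω ∈ Finset.range (rω + 1),
      ∑ σ₁ ∈ Finset.range (r₂ + 1), ∑ σ₂ ∈ Finset.range (r₂ - σ₁ + 1),
        Nat.choose rα iα * Nat.choose rω iω * 2 ^ iω * 2 ^ (σ₁ + σ₂) *
        (Nat.factorial r₂ /
          (Nat.factorial σ₁ * Nat.factorial σ₂ * Nat.factorial (r₂ - σ₁ - σ₂))) *
        (if iα + σ₁ + 2 * σ₂ ≤ zω + k then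
            Nat.choose (zω + k - (iα + σ₁ + 2 * σ₂)) (iω + zω)
          else 0) := by
    classical
    have hcard : ∀ {n : ℕ} (u : Finset (Fin n)), u.card ≤ n := fun u => by
      simpa using Finset.card_le_univ u
    set cl : X → ℕ × ℕ × ℕ × ℕ :=
      fun x => (x.1.card, x.2.2.2.2.1.card, x.2.1.card, x.2.2.1.card) with hcl
    have hmap : ∀ x ∈ T, cl x ∈
        (range (rα+1)) ×ˢ ((range (rω+1)) ×ˢ ((range (r₂+1)) ×ˢ (range (r₂+1)))) := by
      intro x _
      simp only [hcl, Finset.mem_product, mem_range]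
      exact ⟨Nat.lt_succ_of_le (hcard _), Nat.lt_succ_of_le (hcard _),
        Nat.lt_succ_of_le (hcard _), Nat.lt_succ_of_le (hcard _)⟩
    rw [Finset.card_eq_sum_card_fiberwise hmap]
    simp only [Finset.sum_product]
    -- vanishing of impossible fibers
    have hvan : ∀ iα iω σ₁ σ₂ : ℕ, r₂ < σ₁ + σ₂ →
        (T.filter (fun x => cl x = (iα, iω, σ₁, σ₂))).card = 0 := by
      intro iα iω σ₁ σ₂ hlt
      rw [Finset.card_eq_zero, Finset.filter_eq_empty_iff]
      intro x hx
      rw [hTmem] at hx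
      intro hclx
      simp only [hcl, Prod.mk.injEq] at hclx
      obtain ⟨-, -, h1, h2⟩ := hclx
      have hd12 : Disjoint x.2.1 x.2.2.1 := hx.2.1
      have := Finset.card_union_of_disjoint hd12
      have hle := hcard (x.2.1 ∪ x.2.2.1)
      omega
    -- the main fiber bound
    have key : ∀ iα iω σ₁ σ₂ : ℕ, σ₁ + σ₂ ≤ r₂ →
        (T.filter (fun x => cl x = (iα, iω, σ₁, σ₂))).card ≤
        Nat.choose rα iα * Nat.choose rω iω * 2 ^ iω * 2 ^ (σ₁ + σ₂) *
        (Nat.factorial r₂ /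
          (Nat.factorial σ₁ * Nat.factorial σ₂ * Nat.factorial (r₂ - σ₁ - σ₂))) *
        (if iα + σ₁ + 2 * σ₂ ≤ zω + k then
            Nat.choose (zω + k - (iα + σ₁ + 2 * σ₂)) (iω + zω)
          else 0) := by
      intro iα iω σ₁ σ₂ hs12
      by_cases hQ : iα + (σ₁ + 2 * σ₂) + iω ≤ k
      · -- main case
        set M := k - (iα + (σ₁ + 2 * σ₂) + iω) with hM
        set Fs := (powersetCard iα (univ : Finset (Fin rα))) ×ˢ
          ((((powersetCard σ₁ (univ : Finset (Fin r₂))).sigma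
              fun S1 => (powersetCard σ₂ S1ᶜ).sigma fun S2 => (S1 ∪ S2).powerset)) ×ˢ
           ((powersetCard iω (univ : Finset (Fin rω))).sigma
              fun sf => sf.powerset ×ˢ cubeSB (sf.disjSum (univ : Finset (Fin zω))) M)) with hFs
        have hstep : (T.filter (fun x => cl x = (iα, iω, σ₁, σ₂))).card ≤ Fs.card := by
          apply Finset.card_le_card_of_injOn
            (fun x => (x.1, (⟨x.2.1, x.2.2.1, x.2.2.2.1⟩,
              ⟨x.2.2.2.2.1, (x.2.2.2.2.2.1, Sum.elim x.2.2.2.2.2.2.1 x.2.2.2.2.2.2.2)⟩)))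
          · intro x hx
            rw [Finset.mem_coe, mem_filter, hTmem] at hx
            obtain ⟨⟨-, hcon⟩, hclx⟩ := hx
            obtain ⟨hdis, hPsub, hpsub, hm0, hwt⟩ := hcon
            simp only [hcl, Prod.mk.injEq] at hclx
            obtain ⟨e1, e2, e3, e4⟩ := hclx
            rw [hFs, Finset.mem_coe, Finset.mem_product]
            constructor
            · exact Finset.mem_powersetCard_univ.2 e1
            rw [Finset.mem_product]
            constructor
            · rw [Finset.mem_sigma]
              refine ⟨Finset.mem_powersetCard_univ.2 e3, ?_⟩
              rw [Finset.mem_sigma]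
              constructor
              · rw [Finset.mem_powersetCard]
                refine ⟨fun j hj => Finset.mem_compl.2 ?_, e4⟩
                exact fun hj1 => (Finset.disjoint_left.1 hdis hj1) hj
              · exact Finset.mem_powerset.2 hPsub
            · rw [Finset.mem_sigma]
              refine ⟨Finset.mem_powersetCard_univ.2 e2, ?_⟩
              rw [Finset.mem_product]
              refine ⟨Finset.mem_powerset.2 hpsub, ?_⟩
              rw [mem_cubeSB]
              dsimp only
              constructor
              · intro i hi
                cases i with
                | inl j =>
                  rw [Finset.inl_mem_disjSum] at hi
                  exact hm0 j hi
                | inr j =>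
                  exact absurd (Finset.inr_mem_disjSum.2 (mem_univ j)) hi
              · rw [Finset.sum_sumElim]
                have hsub : ∑ j ∈ x.2.2.2.2.1, x.2.2.2.2.2.2.1 j ≤ ∑ j, x.2.2.2.2.2.2.1 j :=
                  Finset.sum_le_sum_of_subset (Finset.subset_univ _)
                omega
          · intro x hx y hy hxy
            obtain ⟨A1, S11, S21, P1, s1, p1, m1, d1⟩ := x
            obtain ⟨A2, S12, S22, P2, s2, p2, m2, d2⟩ := y
            injection hxy with f1 rest
            injection rest with g1 g2
            injection g1 with e2a e2b
            injection e2b with e3a e3b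
            injection g2 with e4a e4b
            injection e4b with e5a e5b
            have hm : m1 = m2 := funext fun j => congrFun e5b (Sum.inl j)
            have hd : d1 = d2 := funext fun j => congrFun e5b (Sum.inr j)
            simp only at f1 e2a e3a e3b e4a e5a
            simp [f1, e2a, e3a, e3b, e4a, e5a, hm, hd]
        have hcA : (powersetCard iα (univ : Finset (Fin rα))).card = rα.choose iα := by
          rw [Finset.card_powersetCard]
          simp
        have hcα : (((powersetCard σ₁ (univ : Finset (Fin r₂))).sigma
              fun S1 => (powersetCard σ₂ S1ᶜ).sigma fun S2 => (S1 ∪ S2).powerset)).card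
            = r₂.choose σ₁ * ((r₂ - σ₁).choose σ₂ * 2 ^ (σ₁ + σ₂)) := by
          rw [Finset.card_sigma]
          have inner : ∀ S1 ∈ powersetCard σ₁ (univ : Finset (Fin r₂)),
              ((powersetCard σ₂ S1ᶜ).sigma fun S2 => (S1 ∪ S2).powerset).card
                = (r₂ - σ₁).choose σ₂ * 2 ^ (σ₁ + σ₂) := by
            intro S1 hS1
            rw [Finset.mem_powersetCard_univ] at hS1
            rw [Finset.card_sigma]
            have inner2 : ∀ S2 ∈ powersetCard σ₂ S1ᶜ,
                ((S1 ∪ S2).powerset).card = 2 ^ (σ₁ + σ₂) := by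
              intro S2 hS2
              rw [Finset.mem_powersetCard] at hS2
              obtain ⟨hS2sub, hS2card⟩ := hS2
              have hdis : Disjoint S1 S2 := by
                rw [Finset.disjoint_left]
                intro j hj1 hj2
                exact (Finset.mem_compl.1 (hS2sub hj2)) hj1
              rw [Finset.card_powerset, Finset.card_union_of_disjoint hdis, hS1, hS2card]
            rw [Finset.sum_congr rfl inner2, Finset.sum_const, Finset.card_powersetCard,
              Finset.card_compl, Fintype.card_fin, hS1, smul_eq_mul]
          rw [Finset.sum_congr rfl inner, Finset.sum_const, Finset.card_powersetCard,
            smul_eq_mul]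
          simp
        have hcβ : (((powersetCard iω (univ : Finset (Fin rω))).sigma
              fun sf => sf.powerset ×ˢ cubeSB (sf.disjSum (univ : Finset (Fin zω))) M)).card
            = rω.choose iω * (2 ^ iω * (M + (iω + zω)).choose (iω + zω)) := by
          rw [Finset.card_sigma]
          have inner : ∀ sf ∈ powersetCard iω (univ : Finset (Fin rω)),
              (sf.powerset ×ˢ cubeSB (sf.disjSum (univ : Finset (Fin zω))) M).card
                = 2 ^ iω * (M + (iω + zω)).choose (iω + zω) := by
            intro sf hsf
            rw [Finset.mem_powersetCard_univ] at hsf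
            rw [Finset.card_product, Finset.card_powerset, hsf, cubeSB_card,
              Finset.card_disjSum, hsf]
            simp
          rw [Finset.sum_congr rfl inner, Finset.sum_const, Finset.card_powersetCard,
            smul_eq_mul]
          simp
        have hFscard : Fs.card = rα.choose iα *
            ((r₂.choose σ₁ * ((r₂ - σ₁).choose σ₂ * 2 ^ (σ₁ + σ₂))) *
             (rω.choose iω * (2 ^ iω * (M + (iω + zω)).choose (iω + zω)))) := by
          rw [hFs, Finset.card_product, Finset.card_product, hcA, hcα, hcβ]
        refine le_trans hstep (le_of_eq ?_)
        rw [hFscard]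
        rw [if_pos (by omega : iα + σ₁ + 2 * σ₂ ≤ zω + k)]
        rw [← multinom_eq r₂ σ₁ σ₂ hs12]
        have harg : M + (iω + zω) = zω + k - (iα + σ₁ + 2 * σ₂) := by omega
        rw [harg]
        ring
      · -- impossible weight: fiber is empty
        have : (T.filter (fun x => cl x = (iα, iω, σ₁, σ₂))).card = 0 := by
          rw [Finset.card_eq_zero, Finset.filter_eq_empty_iff]
          intro x hx
          rw [hTmem] at hx
          intro hclx
          simp only [hcl, Prod.mk.injEq] at hclx
          obtain ⟨e1, e2, e3, e4⟩ := hclx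
          have hwt := hx.2.2.2.2.2
          omega
        rw [this]
        exact Nat.zero_le _
    -- combine
    apply Finset.sum_le_sum
    intro iα _
    apply Finset.sum_le_sum
    intro iω _
    apply Finset.sum_le_sum
    intro σ₁ hσ₁
    rw [mem_range] at hσ₁
    have hshrink : ∑ σ₂ ∈ range (r₂ + 1),
        (T.filter (fun x => cl x = (iα, iω, σ₁, σ₂))).card
        = ∑ σ₂ ∈ range (r₂ - σ₁ + 1),
        (T.filter (fun x => cl x = (iα, iω, σ₁, σ₂))).card := by
      symm
      apply Finset.sum_subset (Finset.range_subset_range.2 (by omega))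
      intro σ₂ _ hσ₂
      rw [mem_range] at hσ₂
      exact hvan iα iω σ₁ σ₂ (by omega)
    rw [hshrink]
    apply Finset.sum_le_sum
    intro σ₂ hσ₂
    rw [mem_range] at hσ₂
    exact key iα iω σ₁ σ₂ (by omega)
  exact le_trans step1 step2
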